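/- For all real numbers a ≥ 0, b > 0 and every integer k ≥ 0, the integral ∫_b^∞ (a + |log r|)^k / r · e^{-r²/8} dr is bounded above by C · ( (a + |log b|)^{k+1}/(k+1) + e^{-b²/8} · Σ_{ℓ=0}^{k} (4k)^ℓ (a + |log b|)^{k-ℓ} ) for some universal constant C > 0 independent of a, b, k. -/

import Mathlib

open MeasureTheory Real Finset

/-- Binomial-type bound: `(x+s)^k ≤ e^s · Σ (4k)^ℓ x^{k-ℓ}`. -/
lemma aux_binom (x s : ℝ) (hx : 0 ≤ x) (hs : 0 ≤ s) (k : ℕ) :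
    (x + s) ^ k ≤ Real.exp s * ∑ ℓ ∈ Finset.range (k + 1),
      (4 * (k : ℝ)) ^ ℓ * x ^ (k - ℓ) := by
  have h1 : ∑ ℓ ∈ Finset.range (k + 1), (4 * (k : ℝ)) ^ ℓ * x ^ (k - ℓ)
      = ∑ i ∈ Finset.range (k + 1), (4 * (k : ℝ)) ^ (k - i) * x ^ i := by
    rw [← Finset.sum_range_reflect]
    refine Finset.sum_congr rfl fun j hj => ?_
    have hj' : j ≤ k := Nat.lt_succ_iff.mp (Finset.mem_range.mp hj)
    have h2 : k + 1 - 1 - j = k - j := by omega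
    rw [h2, Nat.sub_sub_self hj']
  rw [add_pow, h1, Finset.mul_sum]
  refine Finset.sum_le_sum fun i hi => ?_
  have hik : i ≤ k := Nat.lt_succ_iff.mp (Finset.mem_range.mp hi)
  have hds : (k.choose i : ℝ) * (Nat.factorial (k - i) : ℝ) ≤ (4 * (k : ℝ)) ^ (k - i) := by
    have h2 : k.choose i * Nat.factorial (k - i) = k.descFactorial (k - i) := by
      rw [Nat.descFactorial_eq_factorial_mul_choose, Nat.choose_symm hik, mul_comm]
    calc (k.choose i : ℝ) * (Nat.factorial (k - i) : ℝ) = (k.descFactorial (k - i) : ℝ) := by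
          exact_mod_cast congrArg (Nat.cast : ℕ → ℝ) h2
      _ ≤ ((k : ℝ)) ^ (k - i) := by exact_mod_cast Nat.descFactorial_le_pow k (k - i)
      _ ≤ (4 * (k : ℝ)) ^ (k - i) := by
          refine pow_le_pow_left₀ (Nat.cast_nonneg k) (by nlinarith [Nat.cast_nonneg (α := ℝ) k]) _
  have hsp : s ^ (k - i) ≤ (Nat.factorial (k - i) : ℝ) * Real.exp s := by
    have h3 := Real.pow_div_factorial_le_exp s hs (k - i)
    have h4 : (0 : ℝ) < (Nat.factorial (k - i) : ℝ) := by exact_mod_cast Nat.factorial_pos (k - i)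
    rw [div_le_iff₀ h4] at h3
    linarith [h3]
  calc x ^ i * s ^ (k - i) * (k.choose i : ℝ)
      ≤ x ^ i * ((Nat.factorial (k - i) : ℝ) * Real.exp s) * (k.choose i : ℝ) := by
        refine mul_le_mul_of_nonneg_right
          (mul_le_mul_of_nonneg_left hsp (pow_nonneg hx i)) (Nat.cast_nonneg _)
    _ = Real.exp s * ((k.choose i : ℝ) * (Nat.factorial (k - i) : ℝ)) * x ^ i := by ring
    _ ≤ Real.exp s * (4 * (k : ℝ)) ^ (k - i) * x ^ i := by
        refine mul_le_mul_of_nonneg_right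
          (mul_le_mul_of_nonneg_left hds (Real.exp_nonneg s)) (pow_nonneg hx i)
    _ = Real.exp s * ((4 * (k : ℝ)) ^ (k - i) * x ^ i) := by ring

/-- Pointwise Gaussian-type majorant on `[max b 1, ∞)`. -/
lemma aux_ptwise (a b : ℝ) (k : ℕ) (ha : 0 ≤ a) (hb : 0 < b) {r : ℝ}
    (hr : max b 1 ≤ r) :
    (a + |Real.log r|) ^ k / r * Real.exp (-r ^ 2 / 8)
      ≤ Real.exp (-b ^ 2 / 8) * Real.exp 2 *
          (∑ ℓ ∈ Finset.range (k + 1), (4 * (k : ℝ)) ^ ℓ * (a + |Real.log b|) ^ (k - ℓ)) *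
          Real.exp (-(1 / 8) * (r - (max b 1 + 4)) ^ 2) := by
  set m := max b 1 with hm
  set x := a + |Real.log b| with hxdef
  set S := ∑ ℓ ∈ Finset.range (k + 1), (4 * (k : ℝ)) ^ ℓ * x ^ (k - ℓ) with hSdef
  have hm1 : (1 : ℝ) ≤ m := le_max_right _ _
  have hbm : b ≤ m := le_max_left _ _
  have hr1 : (1 : ℝ) ≤ r := hm1.trans hr
  have hr0 : (0 : ℝ) < r := by linarith
  have hm0 : (0 : ℝ) < m := by linarith
  set s := r - m with hsdef
  have hs0 : 0 ≤ s := by simp only [hsdef]; linarith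
  have hx0 : 0 ≤ x := add_nonneg ha (abs_nonneg _)
  have hS0 : 0 ≤ S := Finset.sum_nonneg fun ℓ _ => by positivity
  have hlog : a + |Real.log r| ≤ x + s := by
    have h1 : |Real.log r| = Real.log r := abs_of_nonneg (Real.log_nonneg hr1)
    have h2 : Real.log m ≤ |Real.log b| := by
      rcases le_total b 1 with h | h
      · have : m = 1 := max_eq_right h
        rw [this, Real.log_one]
        exact abs_nonneg _
      · have : m = b := max_eq_left h
        rw [this]
        exact le_abs_self _
    have h3 : Real.log r - Real.log m ≤ r / m - 1 := by
      have h4 := Real.log_le_sub_one_of_pos (show 0 < r / m by positivity)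
      rwa [Real.log_div hr0.ne' hm0.ne'] at h4
    have h5 : r / m - 1 ≤ r - m := by
      have h6 : r / m ≤ r - m + 1 := by
        rw [div_le_iff₀ hm0]
        nlinarith
      linarith
    rw [h1]
    simp only [hsdef, hxdef]
    linarith
  have step1 : (a + |Real.log r|) ^ k / r * Real.exp (-r ^ 2 / 8)
      ≤ (x + s) ^ k * Real.exp (-r ^ 2 / 8) := by
    refine mul_le_mul_of_nonneg_right ?_ (Real.exp_nonneg _)
    calc (a + |Real.log r|) ^ k / r ≤ (a + |Real.log r|) ^ k :=
          div_le_self (pow_nonneg (add_nonneg ha (abs_nonneg _)) k) hr1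
      _ ≤ (x + s) ^ k :=
          pow_le_pow_left₀ (add_nonneg ha (abs_nonneg _)) hlog k
  have step2 : (x + s) ^ k * Real.exp (-r ^ 2 / 8)
      ≤ (Real.exp s * S) * Real.exp (-r ^ 2 / 8) :=
    mul_le_mul_of_nonneg_right (aux_binom x s hx0 hs0 k) (Real.exp_nonneg _)
  have step3 : (Real.exp s * S) * Real.exp (-r ^ 2 / 8)
      ≤ (Real.exp s * S) * (Real.exp (-b ^ 2 / 8) * Real.exp (-s ^ 2 / 8)) := by
    refine mul_le_mul_of_nonneg_left ?_ (mul_nonneg (Real.exp_nonneg _) hS0)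
    rw [← Real.exp_add]
    refine Real.exp_le_exp.2 ?_
    have : r = m + s := by simp [hsdef]
    nlinarith [sq_nonneg s, sq_nonneg (m - b)]
  have key : Real.exp s * Real.exp (-s ^ 2 / 8)
      = Real.exp 2 * Real.exp (-(1 / 8) * (s - 4) ^ 2) := by
    rw [← Real.exp_add, ← Real.exp_add]
    congr 1
    ring
  have hrs : r - (m + 4) = s - 4 := by simp [hsdef]; ring
  calc (a + |Real.log r|) ^ k / r * Real.exp (-r ^ 2 / 8)
      ≤ (Real.exp s * S) * (Real.exp (-b ^ 2 / 8) * Real.exp (-s ^ 2 / 8)) :=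
        le_trans step1 (le_trans step2 step3)
    _ = (Real.exp s * Real.exp (-s ^ 2 / 8)) * S * Real.exp (-b ^ 2 / 8) := by ring
    _ = Real.exp (-b ^ 2 / 8) * Real.exp 2 * S *
          Real.exp (-(1 / 8) * (r - (m + 4)) ^ 2) := by
        rw [key, hrs]; ring

/-- FTC bound for the inner part of the integral. -/
lemma aux_part1 (a b : ℝ) (k : ℕ) (ha : 0 ≤ a) (hb : 0 < b) (hb1 : b ≤ 1) :
    ∫ r in Set.Ico b 1, (a - Real.log r) ^ k / r
      ≤ (a - Real.log b) ^ (k + 1) / (k + 1) := by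
  have hcont : ContinuousOn (fun r => (a - Real.log r) ^ k / r) (Set.Icc b 1) := by
    refine ContinuousOn.div ?_ continuousOn_id ?_
    · exact ((continuousOn_const.sub (Real.continuousOn_log.mono
        (fun r hr => by simp; exact ne_of_gt (lt_of_lt_of_le hb hr.1)))).pow k)
    · intro r hr
      exact ne_of_gt (lt_of_lt_of_le hb hr.1)
  have hderiv : ∀ r ∈ Set.uIcc b 1,
      HasDerivAt (fun r => -((a - Real.log r) ^ (k + 1)) / (k + 1))
        ((a - Real.log r) ^ k / r) r := by
    intro r hr
    rw [Set.uIcc_of_le hb1] at hr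
    have hr0 : (0 : ℝ) < r := lt_of_lt_of_le hb hr.1
    have h1 : HasDerivAt (fun r => a - Real.log r) (-r⁻¹) r :=
      (Real.hasDerivAt_log hr0.ne').const_sub a
    have h2 : HasDerivAt (fun r => (a - Real.log r) ^ (k + 1))
        ((k + 1 : ℕ) * (a - Real.log r) ^ k * (-r⁻¹)) r := by
      simpa using h1.fun_pow (k + 1)
    have h3 := (h2.fun_neg).div_const ((k : ℝ) + 1)
    convert h3 using 1
    · rfl
    · rfl
    have hk : ((k : ℝ) + 1) ≠ 0 := by positivity
    push_cast
    field_simp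
  have hint : IntervalIntegrable (fun r => (a - Real.log r) ^ k / r) volume b 1 :=
    (hcont.mono (by rw [Set.uIcc_of_le hb1])).intervalIntegrable
  have hftc := intervalIntegral.integral_eq_sub_of_hasDerivAt hderiv hint
  have heq : ∫ r in Set.Ico b 1, (a - Real.log r) ^ k / r
      = ∫ r in b..1, (a - Real.log r) ^ k / r := by
    rw [intervalIntegral.integral_of_le hb1, integral_Ioc_eq_integral_Ioo,
      integral_Ico_eq_integral_Ioo]
  rw [heq, hftc, Real.log_one]
  have h5 : (0 : ℝ) ≤ a ^ (k + 1) / (k + 1) := by positivity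
  have h6 : -((a - 0) ^ (k + 1)) / ((k : ℝ) + 1) = -(a ^ (k + 1) / (k + 1)) := by
    ring_nf
  rw [h6]
  have : -((a - Real.log b) ^ (k + 1)) / ((k : ℝ) + 1)
      = -((a - Real.log b) ^ (k + 1) / ((k : ℝ) + 1)) := by ring
  rw [this]
  linarith

/-- For all `a ≥ 0`, `b > 0` and integer `k ≥ 0`,
`∫_b^∞ (a + |log r|)^k / r · e^{-r²/8} dr`
is bounded by `C·((a+|log b|)^{k+1}/(k+1) + e^{-b²/8}·Σ_{ℓ=0}^{k}(4k)^ℓ (a+|log b|)^{k-ℓ})`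
for a universal constant `C > 0`. -/
theorem integral_log_pow_div_mul_exp_le :
    ∃ C : ℝ, 0 < C ∧ ∀ (a b : ℝ) (k : ℕ), 0 ≤ a → 0 < b →
      ∫ r in Set.Ici b, (a + |Real.log r|) ^ k / r * Real.exp (-r ^ 2 / 8)
        ≤ C * ((a + |Real.log b|) ^ (k + 1) / (k + 1)
            + Real.exp (-b ^ 2 / 8) * ∑ ℓ ∈ Finset.range (k + 1),
                (4 * (k : ℝ)) ^ ℓ * (a + |Real.log b|) ^ (k - ℓ)) := by
  refine ⟨Real.exp 2 * Real.sqrt (π / (1 / 8)), by positivity, fun a b k ha hb => ?_⟩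
  set C := Real.exp 2 * Real.sqrt (π / (1 / 8)) with hCdef
  have hC1 : (1 : ℝ) ≤ C := by
    have h1 : (1 : ℝ) ≤ Real.exp 2 := Real.one_le_exp (by norm_num)
    have h2 : (1 : ℝ) ≤ Real.sqrt (π / (1 / 8)) := by
      rw [Real.one_le_sqrt]
      nlinarith [Real.pi_gt_three]
    nlinarith
  set m := max b 1 with hm
  have hm1 : (1 : ℝ) ≤ m := le_max_right _ _
  have hbm : b ≤ m := le_max_left _ _
  have hm0 : (0 : ℝ) < m := by linarith
  set x := a + |Real.log b| with hxdef
  have hx0 : 0 ≤ x := add_nonneg ha (abs_nonneg _)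
  set S := ∑ ℓ ∈ Finset.range (k + 1), (4 * (k : ℝ)) ^ ℓ * x ^ (k - ℓ) with hSdef
  have hS0 : 0 ≤ S := Finset.sum_nonneg fun ℓ _ => by positivity
  set f := fun r : ℝ => (a + |Real.log r|) ^ k / r * Real.exp (-r ^ 2 / 8) with hfdef
  -- continuity of f away from 0
  have hfc : ContinuousOn f {r : ℝ | 0 < r} := by
    refine ContinuousOn.mul (ContinuousOn.div ?_ continuousOn_id ?_) ?_
    · exact ((continuousOn_const.add ((Real.continuousOn_log.mono
        (fun r hr => by simp; exact ne_of_gt hr)).abs)).pow k)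
    · intro r hr; exact ne_of_gt hr
    · exact (Continuous.continuousOn (by continuity))
  -- the Gaussian majorant
  set K := Real.exp (-b ^ 2 / 8) * Real.exp 2 * S with hKdef
  have hK0 : 0 ≤ K := by positivity
  set M := fun r : ℝ => K * Real.exp (-(1 / 8) * (r - (m + 4)) ^ 2) with hMdef
  have hMint : Integrable M := by
    have h1 : Integrable (fun y : ℝ => Real.exp (-(1 / 8) * y ^ 2)) :=
      integrable_exp_neg_mul_sq (by norm_num)
    exact (h1.comp_sub_right (m + 4)).const_mul K
  have hMval : ∫ r : ℝ, M r = K * Real.sqrt (π / (1 / 8)) := by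
    rw [hMdef]
    rw [MeasureTheory.integral_const_mul]
    congr 1
    rw [show (fun r : ℝ => Real.exp (-(1 / 8) * (r - (m + 4)) ^ 2))
        = fun r : ℝ => (fun y : ℝ => Real.exp (-(1 / 8) * y ^ 2)) (r - (m + 4)) from rfl]
    rw [integral_sub_right_eq_self (fun y : ℝ => Real.exp (-(1 / 8) * y ^ 2)) (m + 4)]
    exact integral_gaussian (1 / 8)
  have hptw : ∀ r ∈ Set.Ici m, f r ≤ M r := fun r hr => aux_ptwise a b k ha hb hr
  have hf_nonneg : ∀ r ∈ Set.Ici m, 0 ≤ f r := by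
    intro r hr
    have hr0 : (0 : ℝ) < r := lt_of_lt_of_le hm0 hr
    have := abs_nonneg (Real.log r)
    positivity
  -- integrability of f on the two pieces
  have hfIci : IntegrableOn f (Set.Ici m) := by
    refine Integrable.mono' hMint.integrableOn ?_ ?_
    · exact (hfc.mono (fun r hr => lt_of_lt_of_le hm0 hr)).aestronglyMeasurable
        measurableSet_Ici
    · refine (ae_restrict_iff' measurableSet_Ici).2 (ae_of_all _ fun r hr => ?_)
      rw [Real.norm_of_nonneg (hf_nonneg r hr)]
      exact hptw r hr
  have hfIco : IntegrableOn f (Set.Ico b m) := by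
    refine IntegrableOn.mono_set ?_ Set.Ico_subset_Icc_self
    exact (hfc.mono (fun r hr => lt_of_lt_of_le hb hr.1)).integrableOn_Icc
  -- split the integral
  have hsplit : ∫ r in Set.Ici b, f r
      = (∫ r in Set.Ico b m, f r) + ∫ r in Set.Ici m, f r := by
    rw [← Set.Ico_union_Ici_eq_Ici hbm]
    exact setIntegral_union (Set.disjoint_left.2 fun r hr1 hr2 =>
      absurd hr2 (not_le.2 hr1.2)) measurableSet_Ici hfIco hfIci
  -- part 2 bound
  have hpart2 : ∫ r in Set.Ici m, f r ≤ C * (Real.exp (-b ^ 2 / 8) * S) := by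
    calc ∫ r in Set.Ici m, f r ≤ ∫ r in Set.Ici m, M r :=
          setIntegral_mono_on hfIci hMint.integrableOn measurableSet_Ici hptw
      _ ≤ ∫ r : ℝ, M r := by
          refine setIntegral_le_integral hMint (ae_of_all _ fun r => ?_)
          simp only [hMdef, Pi.zero_apply]
          positivity
      _ = K * Real.sqrt (π / (1 / 8)) := hMval
      _ = C * (Real.exp (-b ^ 2 / 8) * S) := by rw [hKdef, hCdef]; ring
  -- part 1 bound
  have hpart1 : ∫ r in Set.Ico b m, f r ≤ x ^ (k + 1) / (k + 1) := by
    rcases le_or_gt 1 b with h1b | hb1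
    · have : m = b := max_eq_left h1b
      rw [this, Set.Ico_self, Measure.restrict_empty, integral_zero_measure]
      positivity
    · have hmb : m = 1 := max_eq_right hb1.le
      have hxlog : x = a - Real.log b := by
        rw [hxdef, abs_of_nonpos (Real.log_nonpos hb.le hb1.le)]
        ring
      have hstep : ∫ r in Set.Ico b m, f r
          ≤ ∫ r in Set.Ico b 1, (a - Real.log r) ^ k / r := by
        rw [hmb]
        refine setIntegral_mono_on (hmb ▸ hfIco) ?_ measurableSet_Ico ?_
        · refine IntegrableOn.mono_set ?_ Set.Ico_subset_Icc_self
          exact (ContinuousOn.div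
            ((continuousOn_const.sub (Real.continuousOn_log.mono
              (fun r hr => by simp; exact ne_of_gt (lt_of_lt_of_le hb hr.1)))).pow k)
            continuousOn_id
            (fun r hr => ne_of_gt (lt_of_lt_of_le hb hr.1))).integrableOn_Icc
        · intro r hr
          have hr0 : 0 < r := lt_of_lt_of_le hb hr.1
          have hr1 : r ≤ 1 := hr.2.le
          have hlogr : |Real.log r| = -Real.log r :=
            abs_of_nonpos (Real.log_nonpos hr0.le hr1)
          rw [hfdef]
          simp only
          rw [hlogr]
          have hexp : Real.exp (-r ^ 2 / 8) ≤ 1 := by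
            rw [← Real.exp_zero]
            refine Real.exp_le_exp.2 ?_
            nlinarith
          calc (a + -Real.log r) ^ k / r * Real.exp (-r ^ 2 / 8)
              ≤ (a + -Real.log r) ^ k / r * 1 := by
                refine mul_le_mul_of_nonneg_left hexp ?_
                have : 0 ≤ a + -Real.log r := by
                  have := Real.log_nonpos hr0.le hr1
                  linarith
                positivity
            _ = (a - Real.log r) ^ k / r := by ring_nf
      calc ∫ r in Set.Ico b m, f r
          ≤ ∫ r in Set.Ico b 1, (a - Real.log r) ^ k / r := hstep
        _ ≤ (a - Real.log b) ^ (k + 1) / (k + 1) := aux_part1 a b k ha hb hb1.le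
        _ = x ^ (k + 1) / (k + 1) := by rw [hxlog]
  -- assemble
  have hT1 : (0 : ℝ) ≤ x ^ (k + 1) / (k + 1) := by positivity
  have hT2 : (0 : ℝ) ≤ Real.exp (-b ^ 2 / 8) * S := by positivity
  calc ∫ r in Set.Ici b, f r
      = (∫ r in Set.Ico b m, f r) + ∫ r in Set.Ici m, f r := hsplit
    _ ≤ x ^ (k + 1) / (k + 1) + C * (Real.exp (-b ^ 2 / 8) * S) :=
        add_le_add hpart1 hpart2
    _ ≤ C * (x ^ (k + 1) / (k + 1) + Real.exp (-b ^ 2 / 8) * S) := by nlinarith
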